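/- Let d ≥ 2 and let D = {(A_i^{(1)},…,A_i^{(d)})}_{1≤i≤m} be a weak Bollobás system of d-partitions of [n] such that A_i^{(1)} < A_i^{(2)} < ⋯ < A_i^{(d)} for every i ∈ [m], and let s = |⋃_{i=1}^m ⋃_{r=1}^d A_i^{(r)}|. Then m ≤ binom(s + d - 1, d - 1). (Combined with the matching lower bound for skew systems, the maximum size of such a weak Bollobás system equals that of a skew Bollobás system.) -/

import Mathlib

/-- **Proposition (`N_weak(d,s) ≤ C(s+d-1, d-1)`).** If
`{(A_i^{(1)}, …, A_i^{(d)})}_{1 ≤ i ≤ m}` is a weak Bollobás system of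
`d`-partitions of `[n]` with `A_i^{(1)} < A_i^{(2)} < ⋯ < A_i^{(d)}` for every
`i`, and `s` is the size of the support, then `m ≤ C(s + d - 1, d - 1)`. -/
theorem weak_bollobas_ordered_count (n d m : ℕ) (hd : 2 ≤ d)
    (A : Fin m → Fin d → Finset ℕ)
    (hAsub : ∀ i r, A i r ⊆ Finset.Icc 1 n)
    (hAdisj : ∀ i, ∀ p q : Fin d, p ≠ q → Disjoint (A i p) (A i q))
    (hweak : ∀ i j : Fin m, i < j →
      ∃ p q : Fin d, p < q ∧
        (((A i p) ∩ (A j q)).Nonempty ∨ ((A j p) ∩ (A i q)).Nonempty))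
    (hord : ∀ i, ∀ r₁ r₂ : Fin d, r₁ < r₂ →
      ∀ x ∈ A i r₁, ∀ y ∈ A i r₂, x < y) :
    m ≤ ((Finset.univ.biUnion fun i : Fin m =>
          Finset.univ.biUnion fun r : Fin d => A i r).card + d - 1).choose (d - 1) := by
  classical
  set S : Finset ℕ := Finset.univ.biUnion fun i : Fin m =>
      Finset.univ.biUnion fun r : Fin d => A i r with hS
  set s : ℕ := S.card with hs
  -- union of the first `k+1` parts of row `i`
  set B : Fin m → ℕ → Finset ℕ :=
    fun i k => (Finset.univ.filter (fun r : Fin d => (r : ℕ) ≤ k)).biUnion (A i) with hB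
  -- number of support elements below the top of the first `k+1` parts
  set c : Fin m → ℕ → ℕ :=
    fun i k => (S.filter (· ≤ (B i k).sup id)).card with hc
  have hBmono : ∀ i, ∀ k k' : ℕ, k ≤ k' → B i k ⊆ B i k' := by
    intro i k k' hkk
    simp only [hB]
    apply Finset.biUnion_subset_biUnion_of_subset_left
    intro r hr
    simp only [Finset.mem_filter, Finset.mem_univ, true_and] at hr ⊢
    omega
  have hcmono : ∀ i, ∀ k k' : ℕ, k ≤ k' → c i k ≤ c i k' := by
    intro i k k' hkk
    apply Finset.card_le_card
    apply Finset.monotone_filter_right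
    intro y _ hy
    exact le_trans hy (Finset.sup_mono (hBmono i k k' hkk))
  have hcle : ∀ i k, c i k ≤ s := by
    intro i k
    exact Finset.card_le_card (Finset.filter_subset _ _)
  -- The key lemma: if the cutpoint sequences of rows i and j agree, then
  -- no element of A i p can lie in A j q for p < q.
  have key : ∀ i j : Fin m, (∀ k, k < d - 1 → c i k = c j k) →
      ∀ p q : Fin d, p < q → ∀ x, x ∈ A i p → x ∈ A j q → False := by
    intro i j hcc p q hpq x hxi hxj
    have hpd : (p : ℕ) < d - 1 := by
      have := q.isLt
      have hpq' : (p : ℕ) < (q : ℕ) := hpq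
      omega
    have hx1 : 1 ≤ x := (Finset.mem_Icc.mp (hAsub i p hxi)).1
    have hxS : x ∈ S := by
      simp only [hS, Finset.mem_biUnion, Finset.mem_univ, true_and]
      exact ⟨i, p, hxi⟩
    have hxB : x ∈ B i (p : ℕ) := by
      simp only [hB, Finset.mem_biUnion, Finset.mem_filter, Finset.mem_univ, true_and]
      exact ⟨p, le_refl _, hxi⟩
    have hxTi : x ∈ S.filter (· ≤ (B i (p : ℕ)).sup id) :=
      Finset.mem_filter.mpr ⟨hxS, Finset.le_sup (f := id) hxB⟩
    have hTeq : S.filter (· ≤ (B i (p : ℕ)).sup id)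
        = S.filter (· ≤ (B j (p : ℕ)).sup id) := by
      have hceq : c i (p : ℕ) = c j (p : ℕ) := hcc _ hpd
      simp only [hc] at hceq
      rcases le_total ((B i (p : ℕ)).sup id) ((B j (p : ℕ)).sup id) with h | h
      · exact Finset.eq_of_subset_of_card_le
          (Finset.monotone_filter_right _ (fun y _ hy => le_trans hy h)) (le_of_eq hceq.symm)
      · exact (Finset.eq_of_subset_of_card_le
          (Finset.monotone_filter_right _ (fun y _ hy => le_trans hy h)) (le_of_eq hceq)).symm
    have hxTj : x ∈ S.filter (· ≤ (B j (p : ℕ)).sup id) := hTeq ▸ hxTi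
    have hxle : x ≤ (B j (p : ℕ)).sup id := (Finset.mem_filter.mp hxTj).2
    have hBne : (B j (p : ℕ)).Nonempty := by
      by_contra hne
      rw [Finset.not_nonempty_iff_eq_empty] at hne
      rw [hne] at hxle
      simp at hxle
      omega
    obtain ⟨a, haB, hsup⟩ := Finset.exists_mem_eq_sup _ hBne id
    obtain ⟨p', hp', haA⟩ := Finset.mem_biUnion.mp haB
    simp only [Finset.mem_filter, Finset.mem_univ, true_and] at hp'
    have hp'q : p' < q := by
      have hpq' : (p : ℕ) < (q : ℕ) := hpq
      exact Fin.lt_def.mpr (by omega)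
    have halt : a < x := hord j p' q hp'q a haA x hxj
    rw [hsup] at hxle
    simp only [id] at hxle
    omega
  -- the map to subsets
  set φ : Fin m → Finset ℕ :=
    fun i => Finset.univ.image (fun t : Fin (d - 1) => c i (t : ℕ) + (t : ℕ)) with hφ
  have hsm : ∀ i, StrictMono (fun t : Fin (d - 1) => c i (t : ℕ) + (t : ℕ)) := by
    intro i t t' htt
    have h1 : (t : ℕ) < (t' : ℕ) := htt
    have h2 := hcmono i (t : ℕ) (t' : ℕ) (le_of_lt h1)
    simp only []
    omega
  have hφcard : ∀ i, (φ i).card = d - 1 := by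
    intro i
    simp only [hφ]
    rw [Finset.card_image_of_injective _ (hsm i).injective, Finset.card_univ,
      Fintype.card_fin]
  have hφmem : ∀ i, φ i ∈ (Finset.range (s + d - 1)).powersetCard (d - 1) := by
    intro i
    rw [Finset.mem_powersetCard]
    refine ⟨?_, hφcard i⟩
    intro y hy
    simp only [hφ, Finset.mem_image, Finset.mem_univ, true_and] at hy
    obtain ⟨t, rfl⟩ := hy
    have h1 := hcle i (t : ℕ)
    have h2 := t.isLt
    rw [Finset.mem_range]
    omega
  have hφinj : ∀ i ∈ (Finset.univ : Finset (Fin m)), ∀ j ∈ (Finset.univ : Finset (Fin m)),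
      φ i = φ j → i = j := by
    intro i _ j _ hij
    by_contra hne
    -- from equal images, the strictly monotone enumerations agree
    have hcc : ∀ k, k < d - 1 → c i k = c j k := by
      intro k hk
      have hcard : (φ i).card = d - 1 := hφcard i
      have hfi : (fun t : Fin (d - 1) => c i (t : ℕ) + (t : ℕ))
          = (φ i).orderEmbOfFin hcard := by
        apply Finset.orderEmbOfFin_unique hcard _ (hsm i)
        intro t
        simp only [hφ, Finset.mem_image, Finset.mem_univ, true_and]
        exact ⟨t, rfl⟩
      have hfj : (fun t : Fin (d - 1) => c j (t : ℕ) + (t : ℕ))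
          = (φ i).orderEmbOfFin hcard := by
        apply Finset.orderEmbOfFin_unique hcard _ (hsm j)
        intro t
        rw [hij]
        simp only [hφ, Finset.mem_image, Finset.mem_univ, true_and]
        exact ⟨t, rfl⟩
      have heq : (fun t : Fin (d - 1) => c i (t : ℕ) + (t : ℕ))
          = (fun t : Fin (d - 1) => c j (t : ℕ) + (t : ℕ)) := by rw [hfi, hfj]
      have := congrFun heq ⟨k, hk⟩
      simp only [] at this
      omega
    rcases lt_trichotomy i j with hlt | heq | hlt
    · obtain ⟨p, q, hpq, hne'⟩ := hweak i j hlt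
      rcases hne' with ⟨x, hx⟩ | ⟨x, hx⟩
      · rw [Finset.mem_inter] at hx
        exact key i j hcc p q hpq x hx.1 hx.2
      · rw [Finset.mem_inter] at hx
        exact key j i (fun k hk => (hcc k hk).symm) p q hpq x hx.1 hx.2
    · exact hne heq
    · obtain ⟨p, q, hpq, hne'⟩ := hweak j i hlt
      rcases hne' with ⟨x, hx⟩ | ⟨x, hx⟩
      · rw [Finset.mem_inter] at hx
        exact key j i (fun k hk => (hcc k hk).symm) p q hpq x hx.1 hx.2
      · rw [Finset.mem_inter] at hx
        exact key i j hcc p q hpq x hx.1 hx.2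
  have hfinal : (Finset.univ : Finset (Fin m)).card
      ≤ ((Finset.range (s + d - 1)).powersetCard (d - 1)).card :=
    Finset.card_le_card_of_injOn φ (fun i _ => hφmem i) hφinj
  rw [Finset.card_univ, Fintype.card_fin, Finset.card_powersetCard,
    Finset.card_range] at hfinal
  exact hfinal
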